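/- Let n ≥ 1, let ε ∈ ℂ be a primitive n-th root of unity, and let a be an integer. Suppose g, h ∈ Aut_ℂ(K) satisfy g(x) = ε·x, g(y) = εᵃ·y and h(x) = ε·x, h(y) = y. Then g and h are conjugate in Aut_ℂ(K). (Consequently, all diagonal linear automorphisms of the plane of order n generate conjugate cyclic subgroups of the Cremona group.) -/

import Mathlib

/-- The field `K = ℂ(x, y)` of rational functions in two variables over `ℂ`, realized as the
fraction field of the polynomial ring `ℂ[x, y]`. Its group of `ℂ`-algebra automorphisms
`K ≃ₐ[ℂ] K` is the plane Cremona group `Cr(2)`. -/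
noncomputable abbrev PlaneFunctionField : Type :=
  FractionRing (MvPolynomial (Fin 2) ℂ)

/-- The element `x` of `K = ℂ(x, y)`. -/
noncomputable def Xf : PlaneFunctionField :=
  algebraMap (MvPolynomial (Fin 2) ℂ) PlaneFunctionField (MvPolynomial.X 0)

/-- The element `y` of `K = ℂ(x, y)`. -/
noncomputable def Yf : PlaneFunctionField :=
  algebraMap (MvPolynomial (Fin 2) ℂ) PlaneFunctionField (MvPolynomial.X 1)

/-- The image of a complex constant in `K = ℂ(x, y)`. -/
noncomputable def Cf (c : ℂ) : PlaneFunctionField :=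
  algebraMap ℂ PlaneFunctionField c

open MvPolynomial

/-- Extensionality for `ℂ`-algebra homomorphisms out of `ℂ(x,y)`: they are determined by
their values on `x` and `y`. -/
theorem K_algHom_ext {f f' : PlaneFunctionField →ₐ[ℂ] PlaneFunctionField}
    (h1 : f Xf = f' Xf) (h2 : f Yf = f' Yf) : f = f' := by
  have : f.toRingHom = f'.toRingHom := by
    apply IsLocalization.ringHom_ext (nonZeroDivisors (MvPolynomial (Fin 2) ℂ))
    apply MvPolynomial.ringHom_ext
    · intro c
      have hc : (algebraMap (MvPolynomial (Fin 2) ℂ) PlaneFunctionField) (C c)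
          = algebraMap ℂ PlaneFunctionField c := by
        rw [IsScalarTower.algebraMap_apply ℂ (MvPolynomial (Fin 2) ℂ) PlaneFunctionField c,
          MvPolynomial.algebraMap_eq]
      simp only [RingHom.coe_comp, Function.comp_apply, hc]
      exact (f.commutes c).trans (f'.commutes c).symm
    · intro i
      fin_cases i
      · exact h1
      · exact h2
  exact AlgHom.ext fun x => congrArg (fun (r : _ →+* _) => r x) this

/-- The `x`-coordinate is nonzero in `ℂ(x,y)`. -/
theorem Xf_ne_zero : Xf ≠ 0 := by
  have := IsFractionRing.injective (MvPolynomial (Fin 2) ℂ) PlaneFunctionField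
  intro h
  have : (X 0 : MvPolynomial (Fin 2) ℂ) = 0 := by
    apply this
    simp [Xf] at h
  exact MvPolynomial.X_ne_zero 0 this


/-- The polynomial substitution `(x, y) ↦ (x, xᵐy)` is injective on `ℂ[x,y]`. -/
theorem tau_injective (m : ℕ) :
    Function.Injective
      (aeval (R := ℂ) (![X 0, X 0 ^ m * X 1] : Fin 2 → MvPolynomial (Fin 2) ℂ)) := by
  set τ := (aeval (R := ℂ) (![X 0, X 0 ^ m * X 1] : Fin 2 → MvPolynomial (Fin 2) ℂ))
  have key : ∀ r : MvPolynomial (Fin 2) ℂ, τ r = 0 → r = 0 := by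
    intro r hr
    by_contra hr0
    have hx : (X 0 : MvPolynomial (Fin 2) ℂ) * r ≠ 0 :=
      mul_ne_zero (MvPolynomial.X_ne_zero 0) hr0
    have : ¬ ∀ c : Fin 2 → ℂ, eval c (X 0 * r) = eval c 0 := by
      intro hc
      exact hx (MvPolynomial.funext hc)
    push_neg at this
    obtain ⟨c, hc⟩ := this
    simp only [map_mul, eval_X, map_zero] at hc
    have hc0 : c 0 ≠ 0 := fun h => hc (by simp [h])
    have hcr : eval c r ≠ 0 := fun h => hc (by simp [h])
    set c' : Fin 2 → ℂ := ![c 0, c 1 / (c 0) ^ m] with hc'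
    have hcomp : (aeval c' : MvPolynomial (Fin 2) ℂ →ₐ[ℂ] ℂ).comp τ = aeval c := by
      rw [MvPolynomial.comp_aeval]
      congr 1
      funext i
      fin_cases i
      · simp [hc']
      · simp only [Fin.mk_one, Matrix.cons_val_one, Matrix.cons_val_fin_one, Matrix.cons_val_zero, map_mul, map_pow, aeval_X, hc']
        field_simp
    have := congrArg (fun (f : MvPolynomial (Fin 2) ℂ →ₐ[ℂ] ℂ) => f r) hcomp
    simp only [AlgHom.coe_comp, Function.comp_apply, hr, map_zero] at this
    have heq : aeval c r = eval c r := by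
      rw [← MvPolynomial.coe_aeval_eq_eval]; rfl
    exact hcr (heq ▸ this.symm)
  intro p q hpq
  have : τ (p - q) = 0 := by rw [map_sub, hpq, sub_self]
  exact sub_eq_zero.mp (key _ this)

theorem diagonal_automorphisms_conjugate
    (n : ℕ) (hn : 1 ≤ n) (ε : ℂ) (hε : IsPrimitiveRoot ε n) (a : ℤ)
    (g h : PlaneFunctionField ≃ₐ[ℂ] PlaneFunctionField)
    (hgx : g Xf = Cf ε * Xf) (hgy : g Yf = Cf (ε ^ a) * Yf)
    (hhx : h Xf = Cf ε * Xf) (hhy : h Yf = Yf) :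
    ∃ σ : PlaneFunctionField ≃ₐ[ℂ] PlaneFunctionField, σ * g * σ⁻¹ = h := by
  classical
  set A := MvPolynomial (Fin 2) ℂ
  set K := PlaneFunctionField
  -- reduce the exponent modulo n
  set m : ℕ := (a % (n : ℤ)).toNat with hm
  have hn0 : (n : ℤ) ≠ 0 := Int.natCast_ne_zero.mpr (by omega)
  have hε0 : ε ≠ 0 := hε.ne_zero (by omega)
  have hεa : ε ^ a = ε ^ m := by
    have h1 : ε ^ ((n : ℤ) * (a / (n : ℤ))) = 1 := by
      rw [zpow_mul, zpow_natCast, hε.pow_eq_one, one_zpow]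
    calc ε ^ a = ε ^ ((n : ℤ) * (a / (n : ℤ)) + a % (n : ℤ)) := by
          rw [Int.mul_ediv_add_emod]
      _ = ε ^ ((n : ℤ) * (a / (n : ℤ))) * ε ^ (a % (n : ℤ)) := zpow_add₀ hε0 _ _
      _ = ε ^ (a % (n : ℤ)) := by rw [h1, one_mul]
      _ = ε ^ m := by
          rw [show (a % (n : ℤ)) = (m : ℤ) from
            (Int.toNat_of_nonneg (Int.emod_nonneg a hn0)).symm, zpow_natCast]
  -- the algebra map A → K, and basic injectivity
  set ι : A →ₐ[ℂ] K := IsScalarTower.toAlgHom ℂ A K with hι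
  have hιinj : Function.Injective ι := IsFractionRing.injective A K
  -- the forward substitution φ : A →ₐ K, p(x,y) ↦ p(x, xᵐ y)
  set φ : A →ₐ[ℂ] K := aeval ![Xf, Xf ^ m * Yf] with hφdef
  have hφcomp : φ = ι.comp (aeval (R := ℂ) (![X 0, X 0 ^ m * X 1] : Fin 2 → A)) := by
    rw [MvPolynomial.comp_aeval, hφdef]
    congr 1
    funext i
    fin_cases i
    · simp [Xf, hι]; rfl
    · simp only [Matrix.cons_val_one, Matrix.head_cons, map_mul, map_pow]
      simp [Xf, Yf, hι]; rfl
  have hφinj : Function.Injective φ := by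
    rw [hφcomp]
    exact hιinj.comp (tau_injective m)
  -- lift φ to an endomorphism σ̂ of K
  set σ₁ : K →ₐ[ℂ] K := IsFractionRing.liftAlgHom (K := K) (L := K) hφinj with hσ₁
  have hσ₁a : ∀ p : A, σ₁ (ι p) = φ p := by
    intro p
    rw [hσ₁]
    exact IsFractionRing.lift_algebraMap hφinj p
  have hφx : φ (X 0) = Xf := by rw [hφdef, aeval_X, Matrix.cons_val_zero]
  have hφy : φ (X 1) = Xf ^ m * Yf := by
    rw [hφdef, aeval_X, Matrix.cons_val_one, Matrix.cons_val_zero]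
  have hσ₁x : σ₁ Xf = Xf := by
    have h0 := hσ₁a (X 0)
    rw [hφx] at h0
    exact h0
  have hσ₁y : σ₁ Yf = Xf ^ m * Yf := by
    have h0 := hσ₁a (X 1)
    rw [hφy] at h0
    exact h0
  have hXne : Xf ≠ 0 := Xf_ne_zero
  have hXmne : Xf ^ m ≠ 0 := pow_ne_zero _ hXne
  -- the backward substitution φ' : A →ₐ K, p(x,y) ↦ p(x, x⁻ᵐ y)
  set φ' : A →ₐ[ℂ] K := aeval ![Xf, (Xf ^ m)⁻¹ * Yf] with hφ'def
  have hφ'x : φ' (X 0) = Xf := by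
    rw [hφ'def, aeval_X, Matrix.cons_val_zero]
  have hφ'y : φ' (X 1) = (Xf ^ m)⁻¹ * Yf := by
    rw [hφ'def, aeval_X, Matrix.cons_val_one, Matrix.cons_val_zero]
  have hcomp' : σ₁.comp φ' = ι := by
    apply MvPolynomial.algHom_ext
    rw [Fin.forall_fin_two]
    constructor
    · rw [AlgHom.comp_apply, hφ'x, hσ₁x]
      rfl
    · rw [AlgHom.comp_apply, hφ'y, map_mul, map_inv₀, map_pow, hσ₁x, hσ₁y]
      show (Xf ^ m)⁻¹ * (Xf ^ m * Yf) = Yf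
      field_simp
  have hφ'inj : Function.Injective φ' := by
    intro p q hpq
    apply hιinj
    rw [← hcomp']
    simp [hpq]
  set σ₂ : K →ₐ[ℂ] K := IsFractionRing.liftAlgHom (K := K) (L := K) hφ'inj with hσ₂
  have hσ₂a : ∀ p : A, σ₂ (ι p) = φ' p := by
    intro p
    rw [hσ₂]
    exact IsFractionRing.lift_algebraMap hφ'inj p
  have hσ₂x : σ₂ Xf = Xf := by
    have h0 := hσ₂a (X 0)
    rw [hφ'x] at h0
    exact h0
  have hσ₂y : σ₂ Yf = (Xf ^ m)⁻¹ * Yf := by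
    have h0 := hσ₂a (X 1)
    rw [hφ'y] at h0
    exact h0
  -- σ₁ and σ₂ are mutually inverse
  have h12 : σ₁.comp σ₂ = AlgHom.id ℂ K := by
    apply K_algHom_ext
    · simp [AlgHom.coe_comp, Function.comp_apply, hσ₂x, hσ₁x]; rfl
    · simp only [AlgHom.coe_comp, Function.comp_apply, hσ₂y, AlgHom.coe_id, id_eq,
        map_mul, map_inv₀, map_pow, hσ₁x, hσ₁y]
      show (Xf ^ m)⁻¹ * (Xf ^ m * Yf) = Yf
      field_simp
  have h21 : σ₂.comp σ₁ = AlgHom.id ℂ K := by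
    apply K_algHom_ext
    · simp [AlgHom.coe_comp, Function.comp_apply, hσ₂x, hσ₁x]; rfl
    · simp only [AlgHom.coe_comp, Function.comp_apply, hσ₁y, AlgHom.coe_id, id_eq,
        map_mul, map_pow, hσ₂x, hσ₂y]
      show Xf ^ m * ((Xf ^ m)⁻¹ * Yf) = Yf
      field_simp
  set σ : K ≃ₐ[ℂ] K := AlgEquiv.ofAlgHom σ₁ σ₂ h12 h21 with hσ
  have hσx : σ Xf = Xf := hσ₁x
  have hσy : σ Yf = Xf ^ m * Yf := hσ₁y
  refine ⟨σ, ?_⟩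
  rw [mul_inv_eq_iff_eq_mul]
  apply AlgEquiv.coe_algHom_injective
  apply K_algHom_ext
  · show (σ * g) Xf = (h * σ) Xf
    rw [AlgEquiv.mul_apply, AlgEquiv.mul_apply, hgx, hσx, hhx, map_mul, hσx]
    refine congrArg (· * Xf) ?_
    exact σ.commutes ε
  · show σ (g Yf) = h (σ Yf)
    have hCεpow : (Cf ε) ^ m = Cf (ε ^ m) := (map_pow (algebraMap ℂ K) ε m).symm
    calc σ (g Yf) = Cf (ε ^ a) * (Xf ^ m * Yf) := by
          rw [hgy, map_mul, hσy]
          refine congrArg (· * (Xf ^ m * Yf)) ?_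
          exact σ.commutes (ε ^ a)
      _ = Cf (ε ^ m) * (Xf ^ m * Yf) := by rw [hεa]
      _ = h (σ Yf) := by
          rw [hσy, map_mul, map_pow, hhx, hhy, mul_pow, hCεpow]
          ring
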